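/- Conversely, if two deterministic agents A and B are equivalent (one-step interactions agree on all deterministic POMDPs), then their associated process functions are equal as functions M × Ω → M × A. In particular, a witnessing POMDP can be chosen with state space S = Ω × A, transition T((o,a'),a) = (o₀, a) for a fixed o₀ ∈ Ω, observation O((o,a'),a) = o and constant reward 1. -/
import Mathlib

/-- One-step interaction of an agent `(π, U)` with a POMDP `(T, O, R)`. -/
def agentStep {M A Ω S : Type} (π : M → A) (U : M × A × Ω → M)
    (T : S × A → S) (O : S × A → Ω) (R : S × A → ℝ) (m : M) (s : S) :
    M × S × ℝ :=
  (U (m, π m, O (s, π m)), T (s, π m), R (s, π m))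

/-- If two agents are equivalent (one-step interactions agree on
all deterministic POMDPs), then their associated process functions are equal
as functions `M × Ω → M × A`. -/
theorem stmt_7 {M A Ω : Type} [Nonempty M] [Nonempty A] [Nonempty Ω]
    (πA : M → A) (UA : M × A × Ω → M) (πB : M → A) (UB : M × A × Ω → M)
    (hequiv : ∀ (S : Type) (T : S × A → S) (O : S × A → Ω) (R : S × A → ℝ)
      (m : M) (s : S),
      agentStep πA UA T O R m s = agentStep πB UB T O R m s) :
    (fun mo : M × Ω => ((UA (mo.1, πA mo.1, mo.2), πA mo.1) : M × A)) =
    (fun mo : M × Ω => (UB (mo.1, πB mo.1, mo.2), πB mo.1)) := by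
  obtain ⟨o₀⟩ := ‹Nonempty Ω›
  obtain ⟨a₀⟩ := ‹Nonempty A›
  funext mo
  obtain ⟨m, o⟩ := mo
  have h := hequiv (Ω × A) (fun p => (o₀, p.2)) (fun p => p.1.1) (fun _ => 1)
    m (o, a₀)
  simp only [agentStep, Prod.mk.injEq] at h
  obtain ⟨h1, h2, _⟩ := h
  exact Prod.ext h1 h2.2
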